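/- For any r > 0, let y₀ ∈ Y be the unique solution of a_r(y₀,ȳ) = l(ȳ) for all ȳ ∈ Y, and define J_r⋆⋆(λ) := ½∫∫_{Q_T}(T_r λ)λ dxdt − b(y₀,λ). Then sup over λ ∈ L²(Q_T) of inf over y ∈ Y of 𝓛_r(y,λ) equals −inf over λ ∈ L²(Q_T) of J_r⋆⋆(λ) plus 𝓛_r(y₀,0), where 𝓛_r(y,λ) := ½a_r(y,y) + b(y,λ) − l(y). -/

import Mathlib

open scoped RealInnerProductSpace

/-!
Abstract formalization of Proposition 2.4 (dual formulation of the extremal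
problem) of Cîndea–Münch.

Setting (see Statements 0 and 7): `Y` is the completion of
`Y₀ = {y ∈ C²(Q̄_T) : y = 0 on Σ_T}` for the norm
`‖y‖²_Y = ‖ρ₀⁻¹ y‖²_{L²(q_T)} + η ‖ρ⁻¹ L y‖²_{L²(Q_T)}`;
`Hq = L²(q_T)`, `HQ = L²(Q_T)`, `obs y = ρ₀⁻¹ y|_{q_T}`, `lop y = ρ⁻¹ L y`,
`g = ρ₀⁻¹ y_obs`;
`a(y,yb) = ⟪obs y, obs yb⟫`, `b(y,λ) = ⟪lop y, λ⟫`, `l(y) = ⟪obs y, g⟫`,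
`a_r(y,yb) = a(y,yb) + r ⟪lop y, lop yb⟫`,
`𝓛_r(y,λ) = ½ a_r(y,y) + b(y,λ) − l(y)`.
`T = T_r` is the operator of Lemma 2.1 (hypothesis `hT`), `y₀` solves
`a_r(y₀,yb) = l(yb)` for all `yb ∈ Y` (hypothesis `hy₀`), and
`J_r⋆⋆(λ) = ½ ∫∫_{Q_T} (T_r λ)λ − b(y₀,λ)`.

Statement:
`sup_{λ ∈ L²(Q_T)} inf_{y ∈ Y} 𝓛_r(y,λ) = − inf_{λ ∈ L²(Q_T)} J_r⋆⋆(λ) + 𝓛_r(y₀,0)`.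
-/
lemma sup_inf_aux {ι : Type*} [Nonempty ι] (J : ι → ℝ) (C : ℝ)
    (hJ : ∀ i, C ≤ J i) :
    (⨆ i, (-(J i) + C)) = -(⨅ i, J i) + C := by
  have hbb : BddBelow (Set.range J) := ⟨C, by rintro _ ⟨i, rfl⟩; exact hJ i⟩
  have hba : BddAbove (Set.range fun i => -(J i) + C) :=
    ⟨0, by rintro _ ⟨i, rfl⟩; have := hJ i; simpa using by linarith⟩
  apply le_antisymm
  · apply ciSup_le; intro i
    have : (⨅ j, J j) ≤ J i := ciInf_le hbb i
    linarith
  · have h1 : ∀ i, C - (⨆ j, (-(J j) + C)) ≤ J i := by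
      intro i
      have := le_ciSup hba i
      have this : -(J i) + C ≤ ⨆ j, (-(J j) + C) := this
      linarith
    have h2 : C - (⨆ j, (-(J j) + C)) ≤ ⨅ i, J i := le_ciInf h1
    linarith

theorem dual_formulation_eq
    {Y HQ Hq : Type*}
    [NormedAddCommGroup Y] [InnerProductSpace ℝ Y] [CompleteSpace Y]
    [NormedAddCommGroup HQ] [InnerProductSpace ℝ HQ] [CompleteSpace HQ]
    [NormedAddCommGroup Hq] [InnerProductSpace ℝ Hq] [CompleteSpace Hq]
    (obs : Y →L[ℝ] Hq) (lop : Y →L[ℝ] HQ)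
    (η : ℝ) (hη : 0 < η)
    (ρstar Mρ : ℝ) (hρstar : 0 < ρstar) (hMρ : 0 < Mρ)
    (hnorm : ∀ y : Y, ‖y‖ ^ 2 = ‖obs y‖ ^ 2 + η * ‖lop y‖ ^ 2)
    (hsolve : ∀ μ : HQ, ∃ y : Y, lop y = μ ∧ ‖obs y‖ ≤ ρstar⁻¹ * Mρ * ‖μ‖)
    (g : Hq) (r : ℝ) (hr : 0 < r)
    (T : HQ → HQ)
    (hT : ∀ lam : HQ, ∃ y : Y,
      (∀ yb : Y, ⟪obs y, obs yb⟫ + r * ⟪lop y, lop yb⟫ = ⟪lop yb, lam⟫) ∧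
      T lam = lop y)
    (y₀ : Y)
    (hy₀ : ∀ yb : Y, ⟪obs y₀, obs yb⟫ + r * ⟪lop y₀, lop yb⟫ = ⟪obs yb, g⟫) :
    (⨆ lam : HQ, ⨅ y : Y,
        ((1 / 2) * (⟪obs y, obs y⟫ + r * ⟪lop y, lop y⟫) +
          ⟪lop y, lam⟫ - ⟪obs y, g⟫)) =
      -(⨅ lam : HQ, ((1 / 2) * ⟪T lam, lam⟫ - ⟪lop y₀, lam⟫)) +
        ((1 / 2) * (⟪obs y₀, obs y₀⟫ + r * ⟪lop y₀, lop y₀⟫) -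
          ⟪obs y₀, g⟫) := by
  classical
  -- The bilinear form a_r
  set A : Y → Y → ℝ := fun u v => ⟪obs u, obs v⟫ + r * ⟪lop u, lop v⟫ with hA
  have hAsymm : ∀ u v : Y, A u v = A v u := by
    intro u v; simp only [hA]; rw [real_inner_comm, real_inner_comm (lop u)]
  have hAnonneg : ∀ u : Y, 0 ≤ A u u := by
    intro u
    have h1 : (0:ℝ) ≤ ⟪obs u, obs u⟫ := real_inner_self_nonneg
    have h2 : (0:ℝ) ≤ ⟪lop u, lop u⟫ := real_inner_self_nonneg
    have h3 : (0:ℝ) ≤ r * ⟪lop u, lop u⟫ := mul_nonneg hr.le h2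
    simp only [hA]; linarith
  have hAsub : ∀ u v : Y, A (u - v) (u - v) = A u u - 2 * A u v + A v v := by
    intro u v
    simp only [hA, map_sub, real_inner_sub_sub_self]
    ring
  clear_value A
  -- the constant C = 𝓛_r(y₀, 0)
  set C : ℝ := (1 / 2) * (⟪obs y₀, obs y₀⟫ + r * ⟪lop y₀, lop y₀⟫) - ⟪obs y₀, g⟫
    with hC
  have hC' : C = -(1 / 2) * A y₀ y₀ := by
    have h0 := hy₀ y₀
    simp only [hC, hA]; linarith
  -- the dual functional
  set J : HQ → ℝ := fun lam => (1 / 2) * ⟪T lam, lam⟫ - ⟪lop y₀, lam⟫ with hJ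
  clear_value C J
  -- key: the inner infimum equals -(J lam) + C
  have key : ∀ lam : HQ,
      (⨅ y : Y, ((1 / 2) * (⟪obs y, obs y⟫ + r * ⟪lop y, lop y⟫) +
          ⟪lop y, lam⟫ - ⟪obs y, g⟫)) = -(J lam) + C ∧ C ≤ J lam := by
    intro lam
    obtain ⟨z, hz1, hz2⟩ := hT lam
    set w : Y := y₀ - z with hw
    have hAw : ∀ yb : Y, A w yb = ⟪obs yb, g⟫ - ⟪lop yb, lam⟫ := by
      intro yb
      have h1 := hy₀ yb
      have h2 := hz1 yb
      simp only [hA, hw, map_sub, inner_sub_left]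
      linarith
    -- the Lagrangian identity
    have hL : ∀ y : Y,
        (1 / 2) * (⟪obs y, obs y⟫ + r * ⟪lop y, lop y⟫) +
          ⟪lop y, lam⟫ - ⟪obs y, g⟫
        = (1 / 2) * A (y - w) (y - w) - (1 / 2) * A w w := by
      intro y
      have h1 := hAsub y w
      have h2 : A y w = ⟪obs y, g⟫ - ⟪lop y, lam⟫ := by
        rw [hAsymm y w]; exact hAw y
      have h3 : (1 / 2) * (⟪obs y, obs y⟫ + r * ⟪lop y, lop y⟫)
          = (1 / 2) * A y y := by simp only [hA]
      linarith
    have hinf : (⨅ y : Y, ((1 / 2) * (⟪obs y, obs y⟫ + r * ⟪lop y, lop y⟫) +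
          ⟪lop y, lam⟫ - ⟪obs y, g⟫)) = -(1 / 2) * A w w := by
      have hbdd : BddBelow (Set.range fun y : Y =>
          ((1 / 2) * (⟪obs y, obs y⟫ + r * ⟪lop y, lop y⟫) +
            ⟪lop y, lam⟫ - ⟪obs y, g⟫)) := by
        refine ⟨-(1 / 2) * A w w, ?_⟩
        rintro _ ⟨y, rfl⟩
        have := hL y
        have := hAnonneg (y - w)
        simp only []
        linarith
      apply le_antisymm
      · have hle := ciInf_le hbdd w
        have hLw := hL w
        have hww : A (w - w) (w - w) = 0 := by
          simp only [sub_self, hA, map_zero, inner_zero_left]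
          ring
        calc (⨅ y : Y, ((1 / 2) * (⟪obs y, obs y⟫ + r * ⟪lop y, lop y⟫) +
              ⟪lop y, lam⟫ - ⟪obs y, g⟫))
            ≤ (1 / 2) * (⟪obs w, obs w⟫ + r * ⟪lop w, lop w⟫) +
              ⟪lop w, lam⟫ - ⟪obs w, g⟫ := hle
          _ = -(1 / 2) * A w w := by rw [hLw, hww]; ring
      · apply le_ciInf
        intro y
        have := hL y
        have := hAnonneg (y - w)
        linarith
    -- relate -(1/2) A w w to -(J lam) + C
    have hTz : ⟪T lam, lam⟫ = A z z := by
      rw [hz2]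
      have := hz1 z
      simp only [hA]
      linarith
    have hly : ⟪lop y₀, lam⟫ = A z y₀ := by
      have := hz1 y₀
      simp only [hA]
      linarith
    have hww : A w w = A y₀ y₀ - 2 * A y₀ z + A z z := by
      rw [hw]; exact hAsub y₀ z
    have hzy : A z y₀ = A y₀ z := hAsymm z y₀
    constructor
    · rw [hinf, hJ, hC']
      simp only []
      rw [hTz, hly, hww, hzy]
      ring
    · have h1 : -(J lam) + C = -(1 / 2) * A w w := by
        rw [hJ, hC']
        simp only []
        rw [hTz, hly, hww, hzy]
        ring
      have h2 := hAnonneg w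
      linarith
  -- conclude
  calc (⨆ lam : HQ, ⨅ y : Y,
        ((1 / 2) * (⟪obs y, obs y⟫ + r * ⟪lop y, lop y⟫) +
          ⟪lop y, lam⟫ - ⟪obs y, g⟫))
      = ⨆ lam : HQ, (-(J lam) + C) := iSup_congr (fun lam => (key lam).1)
    _ = -(⨅ lam : HQ, J lam) + C := sup_inf_aux J C (fun lam => (key lam).2)
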